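/- arXiv:1408.4554 — 5 statements merged into one kernel-verified Lean document; each statement's English description precedes it below -/
import Mathlib

section
/- Let {π_j : G → U(H_j)}_{j∈J} be an arbitrary family of continuous unitary representations of a topological group G such that I_{π_j} is convex for every j ∈ J, and let π := ⊕_{j∈J} π_j be the direct sum representation on the Hilbert space direct sum (ℓ²-sum) of the family {H_j}_{j∈J}. Then I_π = closure(conv(∪_{j∈J} I_{π_j})), and in particular I_π is convex. -/
open Filter Topology MeasureTheory
open scoped Topology

noncomputable section

/-- The set of continuous one-parameter subgroups of a topological group `G`,
topologized as a subspace of `C(ℝ, G)` (compact-open topology, i.e. topology of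
uniform convergence on compact subsets of `ℝ`). -/
def OneParam (G : Type*) [TopologicalSpace G] [Group G] : Type _ :=
  {γ : C(ℝ, G) // ∀ t s : ℝ, γ (t + s) = γ t * γ s}

instance (G : Type*) [TopologicalSpace G] [Group G] : TopologicalSpace (OneParam G) :=
  inferInstanceAs (TopologicalSpace {γ : C(ℝ, G) // ∀ t s : ℝ, γ (t + s) = γ t * γ s})

section DirDeriv

variable {G : Type*} [TopologicalSpace G] [Group G]
variable {Y : Type*} [TopologicalSpace Y] [AddCommGroup Y] [Module ℝ Y]

/-- `φ` has directional derivative `w` at `g` along the one-parameter subgroup `γ`: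
`w = lim_{t → 0} (φ(g·γ(t)) - φ(g))/t`. -/
def HasDirDerivAt (φ : G → Y) (γ : OneParam G) (g : G) (w : Y) : Prop :=
  Tendsto (fun t : ℝ => t⁻¹ • (φ (g * γ.1 t) - φ g)) (𝓝[≠] (0 : ℝ)) (𝓝 w)

/-- The directional derivative `(D_γ φ)(g) = lim_{t → 0} (φ(g·γ(t)) - φ(g))/t`
(junk value if the limit does not exist). -/
def dirDeriv (φ : G → Y) (γ : OneParam G) (g : G) : Y :=
  haveI : Nonempty Y := ⟨0⟩
  limUnder (𝓝[≠] (0 : ℝ)) (fun t : ℝ => t⁻¹ • (φ (g * γ.1 t) - φ g))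

/-- The right directional derivative `(D^R_γ φ)(g) = lim_{t → 0} (φ(γ(-t)·g) - φ(g))/t`. -/
def rightDirDeriv (φ : G → Y) (γ : OneParam G) (g : G) : Y :=
  haveI : Nonempty Y := ⟨0⟩
  limUnder (𝓝[≠] (0 : ℝ)) (fun t : ℝ => t⁻¹ • (φ (γ.1 (-t) * g) - φ g))

/-- Iterated directional derivatives: `iteratedD φ k γ g = (D_{γ k}(⋯(D_{γ 1} φ)⋯))(g)`,
with the innermost derivative taken along `γ 0`. -/
def iteratedD (φ : G → Y) : (k : ℕ) → (Fin k → OneParam G) → G → Y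
  | 0, _ => φ
  | (k + 1), γ => dirDeriv (iteratedD φ k (fun i => γ i.castSucc)) (γ (Fin.last k))

/-- `φ ∈ C^∞(G, Y)`: `φ` is continuous and all of its iterated directional derivatives
exist everywhere and are jointly continuous. -/
def IsCSmooth (φ : G → Y) : Prop :=
  Continuous φ ∧ ∀ k : ℕ,
    (∀ (γ : Fin (k + 1) → OneParam G) (g : G),
      HasDirDerivAt (iteratedD φ k (fun i => γ i.castSucc)) (γ (Fin.last k)) g
        (iteratedD φ (k + 1) γ g)) ∧
    Continuous (fun p : (Fin (k + 1) → OneParam G) × G => iteratedD φ (k + 1) p.1 p.2)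

theorem IsCSmooth.continuous_iteratedD {φ : G → Y} (hφ : IsCSmooth φ) (k : ℕ) :
    Continuous (fun p : (Fin k → OneParam G) × G => iteratedD φ k p.1 p.2) := by
  cases k with
  | zero => exact hφ.1.comp continuous_snd
  | succ k => exact (hφ.2 k).2

end DirDeriv

/-- A continuous unitary representation of a topological group `G` on a complex
Hilbert space `H`. -/
structure UnitaryRep (G : Type*) (H : Type*) [TopologicalSpace G] [Group G]
    [NormedAddCommGroup H] [InnerProductSpace ℂ H] where
  toFun : G → H →L[ℂ] H
  map_one' : toFun 1 = 1
  map_mul' : ∀ x y : G, toFun (x * y) = (toFun x).comp (toFun y)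
  inner_map' : ∀ (x : G) (v w : H), (inner ℂ (toFun x v) (toFun x w) : ℂ) = inner ℂ v w
  surjective' : ∀ x : G, Function.Surjective (toFun x)
  continuous' : Continuous fun p : G × H => toFun p.1 p.2

namespace UnitaryRep

variable {G : Type*} [TopologicalSpace G] [Group G]
variable {H : Type*} [NormedAddCommGroup H] [InnerProductSpace ℂ H]

/-- The space of smooth vectors `H_∞` of a representation. -/
def smoothVec (π : UnitaryRep G H) : Set H :=
  {v : H | IsCSmooth fun g : G => π.toFun g v}

/-- `dπ(γ)v = lim_{t → 0} (π(γ(t))v - v)/t`. -/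
def dpi (π : UnitaryRep G H) (γ : OneParam G) (v : H) : H :=
  dirDeriv (fun g : G => π.toFun g v) γ 1

/-- The moment map `Ψ_π(v)(γ) = (1/i)⟨dπ(γ)v, v⟩/⟨v, v⟩`, viewed as an element of
`ℝ^{𝔏(G)}`. -/
def momentMap (π : UnitaryRep G H) (v : H) : OneParam G → ℝ :=
  fun γ => ((inner ℂ v (π.dpi γ v) : ℂ) / (inner ℂ v v : ℂ) / Complex.I).re

/-- The image `I⁰_π = Ψ_π(H_∞ \ {0})` of the moment map. -/
def momentSet0 (π : UnitaryRep G H) : Set (OneParam G → ℝ) :=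
  π.momentMap '' (π.smoothVec \ {0})

/-- The closed moment set `I_π`, the closure of `I⁰_π` in `ℝ^{𝔏(G)}` with the
topology of pointwise convergence. -/
def momentSet (π : UnitaryRep G H) : Set (OneParam G → ℝ) :=
  closure π.momentSet0

end UnitaryRep

end

noncomputable section Aux

open ComplexConjugate

section DerivHelpers

variable {G : Type*} [TopologicalSpace G] [Group G]
variable {Y : Type*} [NormedAddCommGroup Y] [NormedSpace ℝ Y]
variable {Z : Type*} [NormedAddCommGroup Z] [NormedSpace ℝ Z]

theorem HasDirDerivAt.dirDeriv_eq {φ : G → Y} {γ : OneParam G} {g : G} {w : Y}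
    (h : HasDirDerivAt φ γ g w) : dirDeriv φ γ g = w :=
  h.limUnder_eq

theorem HasDirDerivAt.clm_comp {φ : G → Y} {γ : OneParam G} {g : G} {w : Y}
    (h : HasDirDerivAt φ γ g w) (T : Y →L[ℝ] Z) :
    HasDirDerivAt (fun x => T (φ x)) γ g (T w) := by
  have h2 := (T.continuous.tendsto w).comp h
  refine h2.congr fun t => ?_
  simp [Function.comp, map_sub, _root_.map_smul]

theorem HasDirDerivAt.add' {φ ψ : G → Y} {γ : OneParam G} {g : G} {w w' : Y}
    (h : HasDirDerivAt φ γ g w) (h' : HasDirDerivAt ψ γ g w') :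
    HasDirDerivAt (fun x => φ x + ψ x) γ g (w + w') := by
  refine (h.add h').congr fun t => ?_
  rw [← smul_add, add_sub_add_comm]

theorem hasDirDerivAt_zero (γ : OneParam G) (g : G) :
    HasDirDerivAt (fun _ : G => (0 : Y)) γ g 0 := by
  have : (fun t : ℝ => t⁻¹ • ((0 : Y) - 0)) = fun _ => (0 : Y) := by
    funext t; simp
  unfold HasDirDerivAt
  rw [this]
  exact tendsto_const_nhds

theorem IsCSmooth.iteratedD_clm {φ : G → Y} (hφ : IsCSmooth φ) (T : Y →L[ℝ] Z) :
    ∀ (k : ℕ) (γ : Fin k → OneParam G) (g : G),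
      iteratedD (fun x => T (φ x)) k γ g = T (iteratedD φ k γ g)
  | 0, _, _ => rfl
  | (k+1), γ, g => by
    have hfun : iteratedD (fun x => T (φ x)) k (fun i => γ i.castSucc)
        = fun h => T (iteratedD φ k (fun i => γ i.castSucc) h) :=
      funext fun h => hφ.iteratedD_clm T k _ h
    show dirDeriv _ _ _ = _
    rw [hfun]
    exact (((hφ.2 k).1 γ g).clm_comp T).dirDeriv_eq

theorem IsCSmooth.clm_comp {φ : G → Y} (hφ : IsCSmooth φ) (T : Y →L[ℝ] Z) :
    IsCSmooth (fun x => T (φ x)) := by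
  refine ⟨T.continuous.comp hφ.1, fun k => ⟨fun γ g => ?_, ?_⟩⟩
  · have hfun : iteratedD (fun x => T (φ x)) k (fun i => γ i.castSucc)
        = fun h => T (iteratedD φ k (fun i => γ i.castSucc) h) :=
      funext fun h => hφ.iteratedD_clm T k _ h
    rw [hfun, hφ.iteratedD_clm T (k+1) γ g]
    exact ((hφ.2 k).1 γ g).clm_comp T
  · have hfun : (fun p : (Fin (k+1) → OneParam G) × G =>
        iteratedD (fun x => T (φ x)) (k+1) p.1 p.2)
        = fun p => T (iteratedD φ (k+1) p.1 p.2) :=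
      funext fun p => hφ.iteratedD_clm T (k+1) p.1 p.2
    rw [hfun]
    exact T.continuous.comp (hφ.2 k).2

theorem IsCSmooth.iteratedD_add {φ ψ : G → Y} (hφ : IsCSmooth φ) (hψ : IsCSmooth ψ) :
    ∀ (k : ℕ) (γ : Fin k → OneParam G) (g : G),
      iteratedD (fun x => φ x + ψ x) k γ g = iteratedD φ k γ g + iteratedD ψ k γ g
  | 0, _, _ => rfl
  | (k+1), γ, g => by
    have hfun : iteratedD (fun x => φ x + ψ x) k (fun i => γ i.castSucc)
        = fun h => iteratedD φ k (fun i => γ i.castSucc) h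
            + iteratedD ψ k (fun i => γ i.castSucc) h :=
      funext fun h => hφ.iteratedD_add hψ k _ h
    show dirDeriv _ _ _ = _
    rw [hfun]
    exact (((hφ.2 k).1 γ g).add' ((hψ.2 k).1 γ g)).dirDeriv_eq

theorem IsCSmooth.add' {φ ψ : G → Y} (hφ : IsCSmooth φ) (hψ : IsCSmooth ψ) :
    IsCSmooth (fun x => φ x + ψ x) := by
  refine ⟨hφ.1.add hψ.1, fun k => ⟨fun γ g => ?_, ?_⟩⟩
  · have hfun : iteratedD (fun x => φ x + ψ x) k (fun i => γ i.castSucc)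
        = fun h => iteratedD φ k (fun i => γ i.castSucc) h
            + iteratedD ψ k (fun i => γ i.castSucc) h :=
      funext fun h => hφ.iteratedD_add hψ k _ h
    rw [hfun, hφ.iteratedD_add hψ (k+1) γ g]
    exact ((hφ.2 k).1 γ g).add' ((hψ.2 k).1 γ g)
  · have hfun : (fun p : (Fin (k+1) → OneParam G) × G =>
        iteratedD (fun x => φ x + ψ x) (k+1) p.1 p.2)
        = fun p => iteratedD φ (k+1) p.1 p.2 + iteratedD ψ (k+1) p.1 p.2 :=
      funext fun p => hφ.iteratedD_add hψ (k+1) p.1 p.2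
    rw [hfun]
    exact ((hφ.2 k).2).add ((hψ.2 k).2)

theorem isCSmooth_zero : IsCSmooth (fun _ : G => (0 : Y)) := by
  have key : ∀ (k : ℕ) (γ : Fin k → OneParam G) (g : G),
      iteratedD (fun _ : G => (0 : Y)) k γ g = 0 := by
    intro k
    induction k with
    | zero => intro _ _; rfl
    | succ k ih =>
      intro γ g
      have hfun : iteratedD (fun _ : G => (0 : Y)) k (fun i => γ i.castSucc)
          = fun _ => (0 : Y) := funext fun h => ih _ h
      show dirDeriv _ _ _ = _
      rw [hfun]
      exact (hasDirDerivAt_zero _ _).dirDeriv_eq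
  refine ⟨continuous_const, fun k => ⟨fun γ g => ?_, ?_⟩⟩
  · have hfun : iteratedD (fun _ : G => (0 : Y)) k (fun i => γ i.castSucc)
        = fun _ => (0 : Y) := funext fun h => key k _ h
    rw [hfun, key (k+1) γ g]
    exact hasDirDerivAt_zero _ _
  · have hfun : (fun p : (Fin (k+1) → OneParam G) × G =>
        iteratedD (fun _ : G => (0 : Y)) (k+1) p.1 p.2) = fun _ => (0 : Y) :=
      funext fun p => key (k+1) p.1 p.2
    rw [hfun]
    exact continuous_const

end DerivHelpers

namespace UnitaryRep

variable {G : Type*} [TopologicalSpace G] [Group G]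
variable {H : Type*} [NormedAddCommGroup H] [InnerProductSpace ℂ H]
variable {K : Type*} [NormedAddCommGroup K] [InnerProductSpace ℂ K]

theorem mem_smoothVec {π : UnitaryRep G H} {v : H} :
    v ∈ π.smoothVec ↔ IsCSmooth (fun g => π.toFun g v) := Iff.rfl

theorem hasDirDerivAt_dpi (π : UnitaryRep G H) {v : H} (hv : v ∈ π.smoothVec)
    (γ : OneParam G) :
    HasDirDerivAt (fun g => π.toFun g v) γ 1 (π.dpi γ v) := by
  have hv' : IsCSmooth (fun g => π.toFun g v) := hv
  have h := (hv'.2 0).1 (fun _ => γ) 1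
  have e : π.dpi γ v = iteratedD (fun g => π.toFun g v) 1 (fun _ => γ) 1 := h.dirDeriv_eq
  rw [e]
  exact h

theorem smoothVec_clm {π : UnitaryRep G H} {ρ : UnitaryRep G K} (T : H →L[ℂ] K)
    {v : H} (hv : v ∈ π.smoothVec) (hT : ∀ g : G, ρ.toFun g (T v) = T (π.toFun g v)) :
    T v ∈ ρ.smoothVec ∧ ∀ γ : OneParam G, ρ.dpi γ (T v) = T (π.dpi γ v) := by
  have hv' : IsCSmooth (fun g => π.toFun g v) := hv
  have hfun : (fun g => ρ.toFun g (T v))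
      = fun g => (T.restrictScalars ℝ) (π.toFun g v) := funext hT
  constructor
  · show IsCSmooth (fun g => ρ.toFun g (T v))
    rw [hfun]
    exact hv'.clm_comp _
  · intro γ
    have h := (π.hasDirDerivAt_dpi hv γ).clm_comp (T.restrictScalars ℝ)
    have h2 : HasDirDerivAt (fun g => ρ.toFun g (T v)) γ 1 (T (π.dpi γ v)) := by
      rw [hfun]; exact h
    exact h2.dirDeriv_eq

theorem smoothVec_zero (π : UnitaryRep G H) : (0 : H) ∈ π.smoothVec := by
  show IsCSmooth (fun g => π.toFun g 0)
  have : (fun g => π.toFun g (0 : H)) = fun _ => (0 : H) := by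
    funext g; exact map_zero (π.toFun g)
  rw [this]
  exact isCSmooth_zero

theorem smoothVec_add (π : UnitaryRep G H) {v w : H}
    (hv : v ∈ π.smoothVec) (hw : w ∈ π.smoothVec) : v + w ∈ π.smoothVec := by
  have hv' : IsCSmooth (fun g => π.toFun g v) := hv
  have hw' : IsCSmooth (fun g => π.toFun g w) := hw
  show IsCSmooth (fun g => π.toFun g (v + w))
  have : (fun g => π.toFun g (v + w)) = fun g => π.toFun g v + π.toFun g w := by
    funext g; exact map_add (π.toFun g) v w
  rw [this]
  exact hv'.add' hw'

theorem smoothVec_smul (π : UnitaryRep G H) {v : H} (hv : v ∈ π.smoothVec) (c : ℂ) :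
    c • v ∈ π.smoothVec ∧ ∀ γ : OneParam G, π.dpi γ (c • v) = c • π.dpi γ v := by
  have h := smoothVec_clm (π := π) (ρ := π) (c • ContinuousLinearMap.id ℂ H) hv
    (fun g => by simp)
  simpa using h

end UnitaryRep

section lpMaps

variable {J : Type*} {Hs : J → Type*} [∀ j, NormedAddCommGroup (Hs j)]
  [∀ j, InnerProductSpace ℂ (Hs j)]

/-- Coordinate evaluation as a continuous linear map on `lp Hs 2`. -/
def lpEval (j : J) : lp Hs 2 →L[ℂ] Hs j :=
  LinearMap.mkContinuous
    { toFun := fun v => v j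
      map_add' := fun v w => by
        have := congrFun (lp.coeFn_add v w) j
        simpa using this
      map_smul' := fun c v => by
        have := congrFun (lp.coeFn_smul c v) j
        simpa using this }
    1 (fun v => by
      show ‖v j‖ ≤ 1 * ‖v‖
      simpa using lp.norm_apply_le_norm (by norm_num) v j)

@[simp] theorem lpEval_apply (j : J) (v : lp Hs 2) : lpEval j v = v j := rfl

variable [DecidableEq J]

/-- `lp.single` as a continuous linear map. -/
def lpSingle (j : J) : Hs j →L[ℂ] lp Hs 2 :=
  LinearMap.mkContinuous
    { toFun := fun x => lp.single 2 j x
      map_add' := fun x y => by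
        apply lp.ext
        funext k
        by_cases h : k = j
        · subst h
          simp [lp.single_apply_self, lp.coeFn_add]
        · simp [lp.single_apply_ne _ _ _ h, lp.coeFn_add]
      map_smul' := fun c x => by simp [lp.single_smul] }
    1 (fun x => by
      have h2 : (0 : ℝ) < (2 : ENNReal).toReal := by norm_num
      have := lp.norm_single (p := 2) (by norm_num) j x
      show ‖lp.single 2 j x‖ ≤ 1 * ‖x‖
      simpa using this.le)

@[simp] theorem lpSingle_apply (j : J) (x : Hs j) : lpSingle j x = lp.single 2 j x := rfl

end lpMaps

end Aux


noncomputable section DirectSumAux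

local notation "⟪" x ", " y "⟫" => (inner ℂ x y : ℂ)

variable {G : Type*} [TopologicalSpace G] [Group G]
variable {J : Type*} {Hs : J → Type*}
  [∀ j, NormedAddCommGroup (Hs j)] [∀ j, InnerProductSpace ℂ (Hs j)]
  [∀ j, CompleteSpace (Hs j)]
variable (πj : ∀ j : J, UnitaryRep G (Hs j)) (π : UnitaryRep G (lp Hs 2))

theorem inner_self_complex {H : Type*} [NormedAddCommGroup H] [InnerProductSpace ℂ H]
    (x : H) : ⟪x, x⟫ = ((‖x‖ ^ 2 : ℝ) : ℂ) := by
  rw [inner_self_eq_norm_sq_to_K]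
  norm_cast

theorem eval_smooth
    (hπ : ∀ (x : G) (v : lp Hs 2) (j : J), (π.toFun x v) j = (πj j).toFun x (v j))
    {v : lp Hs 2} (hv : v ∈ π.smoothVec) (j : J) :
    (v : ∀ i, Hs i) j ∈ (πj j).smoothVec ∧
      ∀ γ : OneParam G, (πj j).dpi γ ((v : ∀ i, Hs i) j)
        = ((π.dpi γ v : lp Hs 2) : ∀ i, Hs i) j := by
  have h := UnitaryRep.smoothVec_clm (π := π) (ρ := πj j) (lpEval j) hv
    (fun g => (hπ g v j).symm)
  simpa using h

theorem single_smooth [DecidableEq J]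
    (hπ : ∀ (x : G) (v : lp Hs 2) (j : J), (π.toFun x v) j = (πj j).toFun x (v j))
    {j : J} {x : Hs j} (hx : x ∈ (πj j).smoothVec) :
    lp.single 2 j x ∈ π.smoothVec := by
  have hT : ∀ g : G, π.toFun g (lpSingle j x) = lpSingle j ((πj j).toFun g x) := by
    intro g
    apply lp.ext
    funext k
    rw [lpSingle_apply, lpSingle_apply, hπ]
    by_cases h : k = j
    · subst h
      rw [lp.single_apply_self, lp.single_apply_self]
    · rw [lp.single_apply_ne _ _ _ h, lp.single_apply_ne _ _ _ h, map_zero]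
  have h := UnitaryRep.smoothVec_clm (π := πj j) (ρ := π) (lpSingle j) hx hT
  simpa using h.1

theorem core_sum [DecidableEq J]
    (hπ : ∀ (x : G) (v : lp Hs 2) (j : J), (π.toFun x v) j = (πj j).toFun x (v j))
    (F : Finset J) (w : J → ℝ) (hw : ∀ j ∈ F, 0 < w j)
    (hsum : ∑ j ∈ F, w j = 1) (u : J → OneParam G → ℝ)
    (hu : ∀ j ∈ F, u j ∈ (πj j).momentSet0) :
    (∑ j ∈ F, w j • u j) ∈ π.momentSet0 := by
  classical
  have hFne : F.Nonempty := Finset.nonempty_of_sum_ne_zero (by rw [hsum]; exact one_ne_zero)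
  have hex : ∀ j : J, ∃ a : Hs j, j ∈ F →
      a ∈ (πj j).smoothVec ∧ a ≠ 0 ∧ (πj j).momentMap a = u j := by
    intro j
    by_cases hj : j ∈ F
    · obtain ⟨a, ⟨h1, h2⟩, h3⟩ := hu j hj
      exact ⟨a, fun _ => ⟨h1, by simpa using h2, h3⟩⟩
    · exact ⟨0, fun h => absurd h hj⟩
  choose x hx using hex
  have hxsm : ∀ j ∈ F, x j ∈ (πj j).smoothVec := fun j hj => (hx j hj).1
  have hxne : ∀ j ∈ F, x j ≠ 0 := fun j hj => (hx j hj).2.1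
  have hxnorm : ∀ j ∈ F, ‖x j‖ ≠ 0 := fun j hj => norm_ne_zero_iff.2 (hxne j hj)
  set c : J → ℝ := fun j => Real.sqrt (w j) / ‖x j‖ with hc
  have hc2 : ∀ j ∈ F, c j ^ 2 = w j / ‖x j‖ ^ 2 := by
    intro j hj
    rw [hc]
    simp only []
    rw [div_pow, Real.sq_sqrt (hw j hj).le]
  set v : lp Hs 2 := ∑ j ∈ F, lp.single 2 j ((c j : ℂ) • x j) with hvdef
  have hcoord : ∀ k : J, (v : ∀ i, Hs i) k = if k ∈ F then (c k : ℂ) • x k else 0 := by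
    intro k
    rw [hvdef, lp.coeFn_sum]
    simp [lp.single_apply, Finset.sum_apply, Finset.sum_dite_eq]
    by_cases hk : k ∈ F
    · rw [if_pos hk, Finset.sum_eq_single k
        (fun b _ hb => by rw [Pi.single_eq_of_ne hb.symm _, smul_zero]) (fun h => absurd hk h),
        Pi.single_eq_same]
    · rw [if_neg hk]
      exact Finset.sum_eq_zero fun b hb => by
        rw [Pi.single_eq_of_ne (by rintro rfl; exact hk hb) _, smul_zero]
  have hsm : v ∈ π.smoothVec := by
    rw [hvdef]
    refine Finset.sum_induction _ (· ∈ π.smoothVec)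
      (fun a b ha hb => π.smoothVec_add ha hb) π.smoothVec_zero (fun j hj => ?_)
    exact single_smooth πj π hπ ((πj j).smoothVec_smul (hxsm j hj) ((c j : ℂ))).1
  obtain ⟨j0, hj0⟩ := hFne
  have hcne : ∀ j ∈ F, c j ≠ 0 := by
    intro j hj
    rw [hc]
    exact div_ne_zero (Real.sqrt_ne_zero'.2 (hw j hj)) (hxnorm j hj)
  have hvne : v ≠ 0 := by
    intro h0
    have hc0 := hcoord j0
    rw [h0, if_pos hj0] at hc0
    have hz : (c j0 : ℂ) • x j0 = 0 := by
      rw [← hc0]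
      simp [lp.coeFn_zero]
    rcases smul_eq_zero.1 hz with h | h
    · exact hcne j0 hj0 (by exact_mod_cast h)
    · exact hxne j0 hj0 h
  have hdpi : ∀ (γ : OneParam G) (k : J),
      ((π.dpi γ v : lp Hs 2) : ∀ i, Hs i) k = (πj k).dpi γ ((v : ∀ i, Hs i) k) :=
    fun γ k => ((eval_smooth πj π hπ hsm k).2 γ).symm
  have hterm : ∀ (γ : OneParam G), ∀ j ∈ F,
      ⟪(v : ∀ i, Hs i) j, ((π.dpi γ v : lp Hs 2) : ∀ i, Hs i) j⟫
        = ((w j / ‖x j‖ ^ 2 : ℝ) : ℂ) * ⟪x j, (πj j).dpi γ (x j)⟫ := by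
    intro γ j hj
    rw [hdpi γ j, hcoord j, if_pos hj,
      ((πj j).smoothVec_smul (hxsm j hj) ((c j : ℂ))).2 γ,
      inner_smul_left, inner_smul_right, Complex.conj_ofReal, ← mul_assoc,
      ← Complex.ofReal_mul, ← sq, hc2 j hj]
  have hvv : ⟪v, v⟫ = 1 := by
    have h1 := lp.hasSum_inner (𝕜 := ℂ) v v
    have h2 : HasSum (fun j => ⟪(v : ∀ i, Hs i) j, (v : ∀ i, Hs i) j⟫)
        (∑ j ∈ F, ⟪(v : ∀ i, Hs i) j, (v : ∀ i, Hs i) j⟫) :=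
      hasSum_sum_of_ne_finset_zero (fun k hk => by rw [hcoord k, if_neg hk]; simp)
    rw [h1.unique h2]
    have e : ∀ j ∈ F, ⟪(v : ∀ i, Hs i) j, (v : ∀ i, Hs i) j⟫ = ((w j : ℝ) : ℂ) := by
      intro j hj
      rw [hcoord j, if_pos hj, inner_smul_left, inner_smul_right, Complex.conj_ofReal,
        inner_self_complex, ← mul_assoc, ← Complex.ofReal_mul, ← sq, hc2 j hj,
        ← Complex.ofReal_mul, div_mul_cancel₀ _ (pow_ne_zero 2 (hxnorm j hj))]
    rw [Finset.sum_congr rfl e]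
    rw [← Complex.ofReal_sum, hsum, Complex.ofReal_one]
  have hinner : ∀ γ : OneParam G, ⟪v, π.dpi γ v⟫
      = ∑ j ∈ F, ((w j / ‖x j‖ ^ 2 : ℝ) : ℂ) * ⟪x j, (πj j).dpi γ (x j)⟫ := by
    intro γ
    have h1 := lp.hasSum_inner (𝕜 := ℂ) v (π.dpi γ v)
    have h2 : HasSum (fun j => ⟪(v : ∀ i, Hs i) j, ((π.dpi γ v : lp Hs 2) : ∀ i, Hs i) j⟫)
        (∑ j ∈ F, ⟪(v : ∀ i, Hs i) j, ((π.dpi γ v : lp Hs 2) : ∀ i, Hs i) j⟫) :=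
      hasSum_sum_of_ne_finset_zero (fun k hk => by rw [hcoord k, if_neg hk]; simp)
    rw [h1.unique h2]
    exact Finset.sum_congr rfl (hterm γ)
  refine ⟨v, ⟨hsm, by simpa using hvne⟩, ?_⟩
  funext γ
  have hmm : π.momentMap v γ = ((⟪v, π.dpi γ v⟫) / Complex.I).re := by
    show ((⟪v, π.dpi γ v⟫) / (⟪v, v⟫) / Complex.I).re = _
    rw [hvv, div_one]
  rw [hmm, hinner γ, Finset.sum_div, Complex.re_sum, Finset.sum_apply]
  refine Finset.sum_congr rfl fun j hj => ?_
  have hu_eq : u j = (πj j).momentMap (x j) := ((hx j hj).2.2).symm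
  rw [Pi.smul_apply, hu_eq, smul_eq_mul]
  show (((w j / ‖x j‖ ^ 2 : ℝ) : ℂ) * ⟪x j, (πj j).dpi γ (x j)⟫ / Complex.I).re
      = w j * ((⟪x j, (πj j).dpi γ (x j)⟫ / ⟪x j, x j⟫ / Complex.I).re)
  rw [inner_self_complex, div_right_comm _ ((‖x j‖ ^ 2 : ℝ) : ℂ),
    Complex.div_ofReal_re, mul_div_assoc, Complex.re_ofReal_mul]
  ring

theorem sum_mem_momentSet [DecidableEq J]
    (hπ : ∀ (x : G) (v : lp Hs 2) (j : J), (π.toFun x v) j = (πj j).toFun x (v j))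
    (F : Finset J) (w : J → ℝ) (hw : ∀ j ∈ F, 0 < w j) (hsum : ∑ j ∈ F, w j = 1)
    (y : J → OneParam G → ℝ) (hy : ∀ j ∈ F, y j ∈ (πj j).momentSet) :
    (∑ j ∈ F, w j • y j) ∈ π.momentSet := by
  classical
  set Φ : (∀ _ : J, OneParam G → ℝ) → (OneParam G → ℝ) := fun u => ∑ j ∈ F, w j • u j
    with hΦdef
  have hΦ : Continuous Φ := by
    refine continuous_finset_sum _ fun j _ => ?_
    exact (continuous_apply j).const_smul (w j)
  have hmem : y ∈ closure ((↑F : Set J).pi fun j => (πj j).momentSet0) := by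
    rw [closure_pi_set]
    exact Set.mem_pi.2 fun j hj => hy j hj
  have himg : Φ '' ((↑F : Set J).pi fun j => (πj j).momentSet0) ⊆ π.momentSet0 := by
    rintro _ ⟨u, hu, rfl⟩
    exact core_sum πj π hπ F w hw hsum u fun j hj => (Set.mem_pi.1 hu) j hj
  have h1 : Φ y ∈ closure π.momentSet0 :=
    closure_mono himg (image_closure_subset_closure_image hΦ (Set.mem_image_of_mem Φ hmem))
  exact h1

theorem momentMap_mem_closure
    (hπ : ∀ (x : G) (v : lp Hs 2) (j : J), (π.toFun x v) j = (πj j).toFun x (v j))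
    {v : lp Hs 2} (hv : v ∈ π.smoothVec) (hvne : v ≠ 0) :
    π.momentMap v ∈ closure (convexHull ℝ (⋃ j : J, (πj j).momentSet)) := by
  classical
  obtain ⟨j0, hj0⟩ : ∃ j : J, (v : ∀ i, Hs i) j ≠ 0 := by
    by_contra h
    push_neg at h
    exact hvne (lp.ext (funext fun j => by simpa using h j))
  set w : J → ℝ := fun j => ‖(v : ∀ i, Hs i) j‖ ^ 2 with hw
  set z : J → OneParam G → ℝ := fun j => (πj j).momentMap ((v : ∀ i, Hs i) j) with hz
  have hwnn : ∀ j, 0 ≤ w j := fun j => sq_nonneg _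
  have hzmem : ∀ j, (v : ∀ i, Hs i) j ≠ 0 → z j ∈ (πj j).momentSet := fun j hj =>
    subset_closure ⟨(v : ∀ i, Hs i) j, ⟨(eval_smooth πj π hπ hv j).1, by simpa using hj⟩, rfl⟩
  set hfn : Finset J → (OneParam G → ℝ) :=
    fun F => (F.filter fun j => (v : ∀ i, Hs i) j ≠ 0).centerMass w z with hhfn
  have hev : ∀ᶠ F in (atTop : Filter (Finset J)),
      hfn F ∈ convexHull ℝ (⋃ j : J, (πj j).momentSet) := by
    filter_upwards [Filter.eventually_ge_atTop ({j0} : Finset J)] with F hF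
    have hj0F : j0 ∈ F.filter fun j => (v : ∀ i, Hs i) j ≠ 0 :=
      Finset.mem_filter.2 ⟨hF (Finset.mem_singleton_self j0), hj0⟩
    refine Finset.centerMass_mem_convexHull _ (fun i _ => hwnn i) ?_ (fun i hi => ?_)
    · refine lt_of_lt_of_le ?_ (Finset.single_le_sum (fun i _ => hwnn i) hj0F)
      have h0 : ‖(v : ∀ i, Hs i) j0‖ ≠ 0 := norm_ne_zero_iff.2 hj0
      rw [hw]
      positivity
    · exact Set.mem_iUnion.2 ⟨i, hzmem i (Finset.mem_filter.1 hi).2⟩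
  have hnv : (0 : ℝ) < ‖v‖ ^ 2 := by
    have : ‖v‖ ≠ 0 := norm_ne_zero_iff.2 hvne
    positivity
  have htend : Tendsto hfn atTop (𝓝 (π.momentMap v)) := by
    rw [tendsto_pi_nhds]
    intro γ
    have hdpi : ∀ k, ((π.dpi γ v : lp Hs 2) : ∀ i, Hs i) k
        = (πj k).dpi γ ((v : ∀ i, Hs i) k) :=
      fun k => ((eval_smooth πj π hπ hv k).2 γ).symm
    set q : J → ℝ := fun j =>
      (⟪(v : ∀ i, Hs i) j, ((π.dpi γ v : lp Hs 2) : ∀ i, Hs i) j⟫ / Complex.I).re with hq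
    have hwz : ∀ j, (v : ∀ i, Hs i) j = 0 → w j = 0 := by
      intro j h0
      rw [hw]
      simp [h0]
    have hkey : ∀ j, w j * z j γ = q j := by
      intro j
      by_cases hvj : (v : ∀ i, Hs i) j = 0
      · rw [hwz j hvj, hq, zero_mul]
        simp [hvj]
      · have hn : ‖(v : ∀ i, Hs i) j‖ ≠ 0 := norm_ne_zero_iff.2 hvj
        have hzγ : z j γ
            = (⟪(v : ∀ i, Hs i) j, (πj j).dpi γ ((v : ∀ i, Hs i) j)⟫
              / ⟪(v : ∀ i, Hs i) j, (v : ∀ i, Hs i) j⟫ / Complex.I).re := rfl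
        rw [hzγ, hq]
        simp only []
        rw [hdpi j, inner_self_complex,
          div_right_comm _ ((‖(v : ∀ i, Hs i) j‖ ^ 2 : ℝ) : ℂ), Complex.div_ofReal_re, hw]
        field_simp
    have hnum : HasSum q ((⟪v, π.dpi γ v⟫ / Complex.I).re) :=
      Complex.hasSum_re ((lp.hasSum_inner (𝕜 := ℂ) v (π.dpi γ v)).div_const Complex.I)
    have hden : HasSum w (‖v‖ ^ 2) := by
      have h0 := Complex.hasSum_re (lp.hasSum_inner (𝕜 := ℂ) v v)
      have e1 : ∀ j, (⟪(v : ∀ i, Hs i) j, (v : ∀ i, Hs i) j⟫).re = w j := fun j => by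
        rw [inner_self_complex, Complex.ofReal_re, hw]
      have e2 : (⟪v, v⟫ : ℂ).re = ‖v‖ ^ 2 := by
        rw [inner_self_complex, Complex.ofReal_re]
      rw [← e2]
      exact h0.congr_fun fun j => (e1 j).symm
    have happly : ∀ F : Finset J,
        hfn F γ = (∑ j ∈ F, w j)⁻¹ * ∑ j ∈ F, q j := by
      intro F
      have e1 : ∑ j ∈ F.filter (fun j => (v : ∀ i, Hs i) j ≠ 0), w j = ∑ j ∈ F, w j :=
        Finset.sum_filter_of_ne fun j _ hne h0 => hne (hwz j h0)
      have e2 : ∑ j ∈ F.filter (fun j => (v : ∀ i, Hs i) j ≠ 0), w j * z j γ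
          = ∑ j ∈ F, w j * z j γ :=
        Finset.sum_filter_of_ne fun j _ hne h0 => hne (by rw [hwz j h0, zero_mul])
      have e3 : hfn F γ
          = (∑ j ∈ F.filter (fun j => (v : ∀ i, Hs i) j ≠ 0), w j)⁻¹
            * ∑ j ∈ F.filter (fun j => (v : ∀ i, Hs i) j ≠ 0), w j * z j γ := by
        rw [hhfn]
        simp only [Finset.centerMass, Finset.sum_apply, Pi.smul_apply, smul_eq_mul]
      rw [e3, e1, e2, Finset.sum_congr rfl fun j _ => hkey j]
    have hlim : Tendsto (fun F : Finset J => (∑ j ∈ F, w j)⁻¹ * ∑ j ∈ F, q j) atTop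
        (𝓝 ((‖v‖ ^ 2)⁻¹ * (⟪v, π.dpi γ v⟫ / Complex.I).re)) :=
      Tendsto.mul (Filter.Tendsto.inv₀ hden hnv.ne') hnum
    have hval : π.momentMap v γ = (‖v‖ ^ 2)⁻¹ * ((⟪v, π.dpi γ v⟫ / Complex.I).re) := by
      show ((⟪v, π.dpi γ v⟫ / ⟪v, v⟫ / Complex.I).re) = _
      rw [inner_self_complex, div_right_comm _ ((‖v‖ ^ 2 : ℝ) : ℂ), Complex.div_ofReal_re]
      exact div_eq_inv_mul _ _
    rw [hval]
    exact Tendsto.congr (fun F => (happly F).symm) hlim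
  exact mem_closure_of_tendsto htend hev

end DirectSumAux

/-- For an arbitrary Hilbert (ℓ²) direct sum `π = ⊕_{j ∈ J} π_j` of continuous unitary
representations with all `I_{π_j}` convex, one has
`I_π = closure (conv (⋃_j I_{π_j}))`; in particular `I_π` is convex. -/
theorem momentSet_directSum
    (G : Type*) [TopologicalSpace G] [Group G]
    (J : Type*) (Hs : J → Type*)
    [∀ j, NormedAddCommGroup (Hs j)] [∀ j, InnerProductSpace ℂ (Hs j)]
    [∀ j, CompleteSpace (Hs j)]
    (πj : ∀ j : J, UnitaryRep G (Hs j))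
    (hconv : ∀ j : J, Convex ℝ (πj j).momentSet)
    (π : UnitaryRep G (lp Hs 2))
    (hπ : ∀ (x : G) (v : lp Hs 2) (j : J), (π.toFun x v) j = (πj j).toFun x (v j)) :
    π.momentSet = closure (convexHull ℝ (⋃ j : J, (πj j).momentSet)) ∧
      Convex ℝ π.momentSet := by
  classical
  have hsub1 : π.momentSet ⊆ closure (convexHull ℝ (⋃ j : J, (πj j).momentSet)) := by
    refine closure_minimal ?_ isClosed_closure
    rintro _ ⟨v, ⟨hsm, hne⟩, rfl⟩
    exact momentMap_mem_closure πj π hπ hsm (by simpa using hne)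
  have hsub2 : convexHull ℝ (⋃ j : J, (πj j).momentSet) ⊆ π.momentSet := by
    intro x hx
    rw [convexHull_eq] at hx
    obtain ⟨ι, t, p, zf, hp0, hp1, hzf, hx⟩ := hx
    have htne : t.Nonempty := Finset.nonempty_of_sum_ne_zero (by rw [hp1]; exact one_ne_zero)
    have hexj : ∀ i : ι, ∃ j : J, i ∈ t → zf i ∈ (πj j).momentSet := by
      intro i
      by_cases hi : i ∈ t
      · obtain ⟨j, hj⟩ := Set.mem_iUnion.1 (hzf i hi)
        exact ⟨j, fun _ => hj⟩
      · obtain ⟨i0, hi0⟩ := htne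
        obtain ⟨j, _⟩ := Set.mem_iUnion.1 (hzf i0 hi0)
        exact ⟨j, fun h => absurd h hi⟩
    choose cmap hcmap using hexj
    set F : Finset J := t.image cmap with hF
    set W : J → ℝ := fun j => ∑ i ∈ t.filter (fun i => cmap i = j), p i with hW
    set Yf : J → OneParam G → ℝ :=
      fun j => (t.filter (fun i => cmap i = j)).centerMass p zf with hYf
    have hWnn : ∀ j, 0 ≤ W j :=
      fun j => Finset.sum_nonneg fun i hi => hp0 i (Finset.mem_filter.1 hi).1
    have hWsum : ∑ j ∈ F, W j = 1 := by
      rw [hW, hF]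
      rw [Finset.sum_fiberwise_of_maps_to (fun i hi => Finset.mem_image_of_mem cmap hi) p]
      exact hp1
    set F' : Finset J := F.filter (fun j => 0 < W j) with hF'
    have hsum' : ∑ j ∈ F', W j = 1 := by
      rw [hF']
      rw [Finset.sum_filter_of_ne fun j _ hne => lt_of_le_of_ne (hWnn j) (Ne.symm hne)]
      exact hWsum
    have hY : ∀ j ∈ F', Yf j ∈ (πj j).momentSet := by
      intro j hj
      obtain ⟨hjF, hjpos⟩ := Finset.mem_filter.1 hj
      have hcm := Finset.centerMass_mem_convexHull (t.filter (fun i => cmap i = j))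
        (fun i hi => hp0 i (Finset.mem_filter.1 hi).1) hjpos
        (fun i hi => (Finset.mem_filter.1 hi).2 ▸ hcmap i (Finset.mem_filter.1 hi).1)
      rwa [(hconv j).convexHull_eq] at hcm
    have hA1 : ∀ j ∈ F',
        (∑ i ∈ t.filter (fun i => cmap i = j), p i • zf i) = W j • Yf j := by
      intro j hj
      obtain ⟨hjF, hjpos⟩ := Finset.mem_filter.1 hj
      rw [hYf]
      simp only [Finset.centerMass]
      rw [smul_inv_smul₀ hjpos.ne']
    have hA0 : ∀ j ∈ F, (∑ i ∈ t.filter (fun i => cmap i = j), p i • zf i) ≠ 0 → 0 < W j := by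
      intro j _ hne
      rcases (hWnn j).lt_or_eq with h | h
      · exact h
      · exfalso
        apply hne
        refine Finset.sum_eq_zero fun i hi => ?_
        have hp00 : p i = 0 := by
          have := (Finset.sum_eq_zero_iff_of_nonneg
            (fun i hi => hp0 i (Finset.mem_filter.1 hi).1)).1 h.symm i hi
          exact this
        rw [hp00, zero_smul]
    have hxeq : x = ∑ j ∈ F', W j • Yf j := by
      rw [← hx, Finset.centerMass_eq_of_sum_1 _ _ hp1]
      rw [← Finset.sum_fiberwise_of_maps_to
        (fun i hi => Finset.mem_image_of_mem cmap hi) (fun i => p i • zf i)]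
      rw [← Finset.sum_filter_of_ne hA0]
      exact Finset.sum_congr rfl fun j hj => hA1 j hj
    rw [hxeq]
    exact sum_mem_momentSet πj π hπ F' W (fun j hj => (Finset.mem_filter.1 hj).2) hsum' Yf hY
  have heq : π.momentSet = closure (convexHull ℝ (⋃ j : J, (πj j).momentSet)) :=
    Set.Subset.antisymm hsub1 (closure_minimal hsub2 isClosed_closure)
  refine ⟨heq, ?_⟩
  rw [heq]
  exact (convex_convexHull ℝ _).closure
end

section
/- Let φ : G₁ → G₂ be a continuous homomorphism of topological groups, 𝔏(φ) : 𝔏(G₁) → 𝔏(G₂), γ ↦ φ∘γ, and P : ℝ^{𝔏(G₂)} → ℝ^{𝔏(G₁)}, P(f) := f ∘ 𝔏(φ). Let π : G₂ → U(H) be a continuous unitary representation, and denote by H_∞(π) and H_∞(π∘φ) the spaces of smooth vectors of π and of π∘φ : G₁ → U(H), respectively. Then H_∞(π) ⊆ H_∞(π∘φ) and P(I⁰_π) ⊆ I⁰_{π∘φ}. If moreover H_∞(π) is dense in H_∞(π∘φ) with respect to the topology of H_∞(π∘φ), then closure(P(I_π)) = I_{π∘φ}; if in addition I_π is convex, then I_{π∘φ}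 is convex. -/
open Filter Topology MeasureTheory
open scoped Topology

noncomputable section

/-- The space `C^∞(G, Y)` of smooth functions, topologized below by uniform convergence
of all iterated directional derivatives on compact sets (this coincides with the locally
convex topology given by the seminorms `p_{K₁,K₂}`). -/
def SmoothFns (G : Type*) [TopologicalSpace G] [Group G]
    (Y : Type*) [TopologicalSpace Y] [AddCommGroup Y] [Module ℝ Y] : Type _ :=
  {φ : G → Y // IsCSmooth φ}

variable {G : Type*} [TopologicalSpace G] [Group G]
variable {Y : Type*} [TopologicalSpace Y] [AddCommGroup Y] [Module ℝ Y]

/-- The `k`-th iterated derivative of a smooth function, as a continuous map. -/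
def SmoothFns.iteratedDCM (f : SmoothFns G Y) (k : ℕ) :
    C((Fin k → OneParam G) × G, Y) :=
  ⟨fun p => iteratedD f.1 k p.1 p.2, f.2.continuous_iteratedD k⟩

/-- The topology of `C^∞(G, Y)`: the coarsest topology making all the maps
`f ↦ D^k f ∈ C(𝔏(G)^k × G, Y)` continuous, where the spaces of continuous maps carry the
compact-open topology (the topology of uniform convergence on compact sets). -/
instance : TopologicalSpace (SmoothFns G Y) :=
  ⨅ k : ℕ, TopologicalSpace.induced (fun f : SmoothFns G Y => f.iteratedDCM k)
    inferInstance

namespace UnitaryRep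

variable {H : Type*} [NormedAddCommGroup H] [InnerProductSpace ℂ H]

/-- The space of smooth vectors `H_∞`, as a type. -/
def SmoothVecs (π : UnitaryRep G H) : Type _ := {v : H // v ∈ π.smoothVec}

/-- The canonical injection `A : H_∞ → C^∞(G, H)`, `v ↦ π(·)v`. -/
def smoothVecEmbed (π : UnitaryRep G H) (v : π.SmoothVecs) : SmoothFns G H :=
  ⟨fun g : G => π.toFun g v.1, v.2⟩

/-- The topology of the space of smooth vectors: the topology induced from `C^∞(G, H)`
via `A : v ↦ π(·)v`. -/
instance (π : UnitaryRep G H) : TopologicalSpace π.SmoothVecs :=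
  TopologicalSpace.induced π.smoothVecEmbed inferInstance

end UnitaryRep

end
noncomputable section

/-- The functor `𝔏`: a continuous homomorphism `φ : G₁ → G₂` induces a map
`𝔏(φ) : 𝔏(G₁) → 𝔏(G₂)`, `γ ↦ φ ∘ γ`. -/
def OneParam.map {G₁ G₂ : Type*} [TopologicalSpace G₁] [Group G₁]
    [TopologicalSpace G₂] [Group G₂]
    (φ : G₁ →* G₂) (hφ : Continuous φ) (γ : OneParam G₁) : OneParam G₂ :=
  ⟨⟨fun t : ℝ => φ (γ.1 t), hφ.comp γ.1.continuous⟩,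
    fun t s => by simp only [ContinuousMap.coe_mk, γ.2 t s, map_mul]⟩

/-- The pull-back `π ∘ φ` of a representation along a continuous homomorphism. -/
def UnitaryRep.comp {G₁ G₂ : Type*} [TopologicalSpace G₁] [Group G₁]
    [TopologicalSpace G₂] [Group G₂]
    {H : Type*} [NormedAddCommGroup H] [InnerProductSpace ℂ H]
    (π : UnitaryRep G₂ H) (φ : G₁ →* G₂) (hφ : Continuous φ) : UnitaryRep G₁ H where
  toFun := fun x : G₁ => π.toFun (φ x)
  map_one' := by simpa using π.map_one'
  map_mul' := fun x y => by simpa using π.map_mul' (φ x) (φ y)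
  inner_map' := fun x v w => π.inner_map' (φ x) v w
  surjective' := fun x => π.surjective' (φ x)
  continuous' := π.continuous'.comp ((hφ.comp continuous_fst).prodMk continuous_snd)

end
noncomputable section MomentAux

namespace MomentAux

variable {G₁ G₂ : Type*} [TopologicalSpace G₁] [Group G₁] [TopologicalSpace G₂] [Group G₂]
variable (φ : G₁ →* G₂) (hφ : Continuous φ)
variable {Y : Type*} [TopologicalSpace Y] [AddCommGroup Y] [Module ℝ Y]

set_option linter.unusedSectionVars false

include hφ

theorem fun_eq (f : G₂ → Y) (γ : OneParam G₁) (g : G₁) :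
    (fun t : ℝ => t⁻¹ • (f (φ (g * γ.1 t)) - f (φ g)))
      = fun t : ℝ => t⁻¹ • (f (φ g * (OneParam.map φ hφ γ).1 t) - f (φ g)) := by
  funext t
  simp [OneParam.map, map_mul]

theorem dirDeriv_comp (f : G₂ → Y) (γ : OneParam G₁) (g : G₁) :
    dirDeriv (fun x => f (φ x)) γ g = dirDeriv f (OneParam.map φ hφ γ) (φ g) := by
  unfold dirDeriv
  rw [fun_eq φ hφ f γ g]

theorem hasDirDerivAt_comp {f : G₂ → Y} {γ : OneParam G₁} {g : G₁} {w : Y}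
    (h : HasDirDerivAt f (OneParam.map φ hφ γ) (φ g) w) :
    HasDirDerivAt (fun x => f (φ x)) γ g w := by
  unfold HasDirDerivAt at h ⊢
  rw [fun_eq φ hφ f γ g]
  exact h

theorem iteratedD_comp (f : G₂ → Y) : ∀ (k : ℕ) (γ : Fin k → OneParam G₁) (g : G₁),
    iteratedD (fun x => f (φ x)) k γ g
      = iteratedD f k (fun i => OneParam.map φ hφ (γ i)) (φ g)
  | 0, _, _ => rfl
  | (k+1), γ, g => by
    show dirDeriv (iteratedD (fun x => f (φ x)) k fun i => γ i.castSucc)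
        (γ (Fin.last k)) g = _
    have h : (iteratedD (fun x => f (φ x)) k fun i => γ i.castSucc)
        = fun x => iteratedD f k (fun i => OneParam.map φ hφ (γ i.castSucc)) (φ x) :=
      funext fun x => iteratedD_comp f k _ x
    rw [h, dirDeriv_comp φ hφ (iteratedD f k fun i => OneParam.map φ hφ (γ i.castSucc))
      (γ (Fin.last k)) g]
    rfl

theorem continuous_map : Continuous (OneParam.map φ hφ) := by
  refine Continuous.subtype_mk ?_ _
  exact (ContinuousMap.continuous_postcomp ⟨φ, hφ⟩).comp continuous_subtype_val

set_option maxHeartbeats 1600000 in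
theorem isCSmooth_comp {f : G₂ → Y} (hf : IsCSmooth f) :
    IsCSmooth (fun x => f (φ x)) := by
  refine ⟨hf.1.comp hφ, fun k => ⟨?_, ?_⟩⟩
  · intro γ g
    have h : (iteratedD (fun x => f (φ x)) k fun i => γ i.castSucc)
        = fun x => iteratedD f k (fun i => OneParam.map φ hφ (γ i.castSucc)) (φ x) :=
      funext fun x => iteratedD_comp φ hφ f k _ x
    rw [h, iteratedD_comp φ hφ f (k+1) γ g]
    exact hasDirDerivAt_comp φ hφ ((hf.2 k).1 (fun i => OneParam.map φ hφ (γ i)) (φ g))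
  · have h : (fun p : (Fin (k+1) → OneParam G₁) × G₁ =>
        iteratedD (fun x => f (φ x)) (k+1) p.1 p.2)
        = fun p : (Fin (k+1) → OneParam G₁) × G₁ =>
          iteratedD f (k+1) (fun i => OneParam.map φ hφ (p.1 i)) (φ p.2) :=
      funext fun p => iteratedD_comp φ hφ f (k+1) p.1 p.2
    rw [h]
    have hq : Continuous fun p : (Fin (k+1) → OneParam G₁) × G₁ =>
        ((fun i => OneParam.map φ hφ (p.1 i), φ p.2) : (Fin (k+1) → OneParam G₂) × G₂) :=
      (continuous_pi fun i => (continuous_map φ hφ).comp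
        ((continuous_apply i).comp continuous_fst)).prodMk (hφ.comp continuous_snd)
    exact ((hf.2 k).2).comp hq

variable {H : Type*} [NormedAddCommGroup H] [InnerProductSpace ℂ H]

theorem dpi_comp (π : UnitaryRep G₂ H) (γ : OneParam G₁) (v : H) :
    (π.comp φ hφ).dpi γ v = π.dpi (OneParam.map φ hφ γ) v := by
  have h := dirDeriv_comp φ hφ (fun g => π.toFun g v) γ 1
  simpa [UnitaryRep.dpi, UnitaryRep.comp] using h

theorem momentMap_comp (π : UnitaryRep G₂ H) (v : H) :
    (π.comp φ hφ).momentMap v = fun γ => π.momentMap v (OneParam.map φ hφ γ) := by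
  funext γ
  unfold UnitaryRep.momentMap
  rw [dpi_comp]

omit hφ

variable {G : Type*} [TopologicalSpace G] [Group G]

theorem continuous_iteratedD_eval (ρ : UnitaryRep G H) (k : ℕ)
    (γ : Fin k → OneParam G) (g : G) :
    Continuous fun v : ρ.SmoothVecs => iteratedD (fun x => ρ.toFun x v.1) k γ g := by
  have h1 : Continuous (ρ.smoothVecEmbed) := continuous_induced_dom
  have h2 : Continuous fun f : SmoothFns G H => f.iteratedDCM k :=
    continuous_iInf_dom continuous_induced_dom
  exact (continuous_eval_const (γ, g)).comp (h2.comp h1)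

theorem continuous_coe (ρ : UnitaryRep G H) :
    Continuous fun v : ρ.SmoothVecs => (v.1 : H) := by
  have h := continuous_iteratedD_eval ρ 0 (fun i => i.elim0) 1
  simpa [iteratedD, ρ.map_one'] using h

theorem continuous_dpi (ρ : UnitaryRep G H) (γ : OneParam G) :
    Continuous fun v : ρ.SmoothVecs => ρ.dpi γ v.1 :=
  continuous_iteratedD_eval ρ 1 (fun _ => γ) 1

theorem continuousAt_momentMap (ρ : UnitaryRep G H) {w : ρ.SmoothVecs}
    (hw : (w.1 : H) ≠ 0) :
    ContinuousAt (fun v : ρ.SmoothVecs => ρ.momentMap v.1) w := by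
  rw [continuousAt_pi]
  intro γ
  unfold UnitaryRep.momentMap
  apply Complex.continuous_re.continuousAt.comp
  apply ContinuousAt.div_const
  apply ContinuousAt.div
  · exact (continuous_inner.comp
      ((continuous_coe ρ).prodMk (continuous_dpi ρ γ))).continuousAt
  · exact (continuous_inner.comp
      ((continuous_coe ρ).prodMk (continuous_coe ρ))).continuousAt
  · simpa [inner_self_eq_zero] using hw

end MomentAux

end MomentAux

/-- Pull-back of moment sets along a continuous homomorphism `φ : G₁ → G₂`: with
`P : ℝ^{𝔏(G₂)} → ℝ^{𝔏(G₁)}`, `P(f) = f ∘ 𝔏(φ)`, one has `H_∞(π) ⊆ H_∞(π∘φ)` and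
`P(I⁰_π) ⊆ I⁰_{π∘φ}`; if moreover `H_∞(π)` is dense in `H_∞(π∘φ)`, then
`closure (P(I_π)) = I_{π∘φ}`, and if in addition `I_π` is convex then so is `I_{π∘φ}`. -/
theorem momentSet_comp
    (G₁ G₂ : Type*) [TopologicalSpace G₁] [Group G₁] [TopologicalSpace G₂] [Group G₂]
    (φ : G₁ →* G₂) (hφ : Continuous φ)
    (H : Type*) [NormedAddCommGroup H] [InnerProductSpace ℂ H]
    (π : UnitaryRep G₂ H)
    (P : (OneParam G₂ → ℝ) → (OneParam G₁ → ℝ))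
    (hP : ∀ (f : OneParam G₂ → ℝ) (γ : OneParam G₁), P f γ = f (OneParam.map φ hφ γ)) :
    π.smoothVec ⊆ (π.comp φ hφ).smoothVec ∧
      P '' π.momentSet0 ⊆ (π.comp φ hφ).momentSet0 ∧
      (Dense {w : (π.comp φ hφ).SmoothVecs | (w.1 : H) ∈ π.smoothVec} →
        closure (P '' π.momentSet) = (π.comp φ hφ).momentSet ∧
          (Convex ℝ π.momentSet → Convex ℝ (π.comp φ hφ).momentSet)) := by
  have hsm : π.smoothVec ⊆ (π.comp φ hφ).smoothVec := fun v hv =>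
    MomentAux.isCSmooth_comp φ hφ hv
  have hmm : ∀ v : H, (π.comp φ hφ).momentMap v = P (π.momentMap v) := by
    intro v
    rw [MomentAux.momentMap_comp φ hφ π v]
    exact funext fun γ => (hP _ γ).symm
  have h0 : P '' π.momentSet0 ⊆ (π.comp φ hφ).momentSet0 := by
    rintro _ ⟨_, ⟨v, hv, rfl⟩, rfl⟩
    exact ⟨v, ⟨hsm hv.1, hv.2⟩, hmm v⟩
  refine ⟨hsm, h0, fun hdense => ?_⟩
  have hPc : Continuous P := by
    have h : P = fun f γ => f (OneParam.map φ hφ γ) := funext fun f => funext (hP f)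
    rw [h]
    exact continuous_pi fun γ => continuous_apply _
  have hlin : IsLinearMap ℝ P :=
    ⟨fun f g => funext fun γ => by simp only [hP, Pi.add_apply],
     fun c f => funext fun γ => by simp only [hP, Pi.smul_apply]⟩
  have hsub1 : closure (P '' π.momentSet) ⊆ (π.comp φ hφ).momentSet := by
    refine closure_minimal ?_ isClosed_closure
    calc P '' π.momentSet ⊆ closure (P '' π.momentSet0) :=
          image_closure_subset_closure_image hPc
      _ ⊆ (π.comp φ hφ).momentSet := closure_mono h0
  have hsub2 : (π.comp φ hφ).momentSet ⊆ closure (P '' π.momentSet) := by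
    refine closure_minimal ?_ isClosed_closure
    rintro _ ⟨v, ⟨hv, hv0⟩, rfl⟩
    set ρ := π.comp φ hφ with hρ
    have hv0' : v ≠ 0 := hv0
    set w : ρ.SmoothVecs := ⟨v, hv⟩ with hw
    have hU : IsOpen {u : ρ.SmoothVecs | (u.1 : H) ≠ 0} :=
      isOpen_compl_singleton.preimage (MomentAux.continuous_coe ρ)
    have hwc : w ∈ closure ({u : ρ.SmoothVecs | (u.1 : H) ≠ 0} ∩
        {u : ρ.SmoothVecs | (u.1 : H) ∈ π.smoothVec}) :=
      hdense.open_subset_closure_inter hU hv0'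
    have hcont : ContinuousAt (fun u : ρ.SmoothVecs => ρ.momentMap u.1) w :=
      MomentAux.continuousAt_momentMap ρ hv0'
    have himg := hcont.continuousWithinAt.mem_closure_image hwc
    have hsubimg : (fun u : ρ.SmoothVecs => ρ.momentMap u.1) ''
        ({u : ρ.SmoothVecs | (u.1 : H) ≠ 0} ∩
          {u : ρ.SmoothVecs | (u.1 : H) ∈ π.smoothVec}) ⊆ P '' π.momentSet := by
      rintro _ ⟨u, ⟨hu0, husm⟩, rfl⟩
      exact ⟨π.momentMap u.1, subset_closure ⟨u.1, ⟨husm, hu0⟩, rfl⟩, (hmm u.1).symm⟩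
    exact closure_mono hsubimg himg
  have heq : closure (P '' π.momentSet) = (π.comp φ hφ).momentSet :=
    subset_antisymm hsub1 hsub2
  refine ⟨heq, fun hconv => ?_⟩
  rw [← heq]
  exact (hconv.is_linear_image hlin).closure
end

section
/- Let G be a topological group and π : G → U(H) a continuous unitary representation on a finite-dimensional complex Hilbert space H. Then every vector of H is a smooth vector, i.e. H_∞ = H. -/
open Filter Topology MeasureTheory
open scoped Topology

noncomputable section SmoothVecAux

open Filter Topology intervalIntegral

namespace SmoothVecAux

set_option synthInstance.maxHeartbeats 1000000
set_option maxHeartbeats 1000000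
set_option linter.unusedSectionVars false
set_option linter.deprecated false

/-- Continuity of the interval integral as a function on `C(ℝ, E)` with the compact-open
topology. -/
lemma continuous_integralCM {E : Type*} [NormedAddCommGroup E] [NormedSpace ℝ E] (a b : ℝ) :
    Continuous fun f : C(ℝ, E) => ∫ t in a..b, f t := by
  rw [continuous_iff_continuousAt]
  intro f₀
  have hu : TendstoUniformlyOn (fun (f : C(ℝ, E)) x => f x) (⇑f₀) (𝓝 f₀) (Set.uIcc a b) :=
    (ContinuousMap.tendsto_iff_forall_isCompact_tendstoUniformlyOn.mp Filter.tendsto_id)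
      _ isCompact_uIcc
  rw [ContinuousAt, Metric.tendsto_nhds]
  intro δ hδ
  have hη : 0 < δ / (|b - a| + 1) := div_pos hδ (by positivity)
  filter_upwards [Metric.tendstoUniformlyOn_iff.mp hu _ hη] with f hf
  have h1 : ∀ x ∈ Set.uIoc a b, ‖f x - f₀ x‖ ≤ δ / (|b - a| + 1) := by
    intro x hx
    have := hf x (Set.uIoc_subset_uIcc hx)
    rw [dist_comm, dist_eq_norm] at this
    exact this.le
  have h2 : (∫ t in a..b, f t) - (∫ t in a..b, f₀ t) = ∫ t in a..b, (f t - f₀ t) :=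
    (intervalIntegral.integral_sub (f.continuous.intervalIntegrable a b)
      (f₀.continuous.intervalIntegrable a b)).symm
  rw [dist_eq_norm, h2]
  calc ‖∫ t in a..b, (f t - f₀ t)‖ ≤ δ / (|b - a| + 1) * |b - a| :=
        intervalIntegral.norm_integral_le_of_norm_le_const h1
    _ < δ / (|b - a| + 1) * (|b - a| + 1) := mul_lt_mul_of_pos_left (lt_add_one _) hη
    _ = δ := div_mul_cancel₀ _ (by positivity)

variable {G : Type*} [TopologicalSpace G] [Group G]
variable {H : Type*} [NormedAddCommGroup H] [InnerProductSpace ℂ H] [FiniteDimensional ℂ H]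
variable (π : UnitaryRep G H)

/-- The representation, as a map into the operator space, is continuous (finite dimension). -/
lemma continuous_rep : Continuous fun g : G => π.toFun g := by
  classical
  let b := Module.Basis.ofVectorSpace ℂ H
  haveI : Fintype (Module.Basis.ofVectorSpaceIndex ℂ H) := FiniteDimensional.fintypeBasisIndex b
  let L : (H →L[ℂ] H) →ₗ[ℂ] (Module.Basis.ofVectorSpaceIndex ℂ H → H) :=
    { toFun := fun T i => T (b i)
      map_add' := fun T S => by funext i; simp
      map_smul' := fun c T => by funext i; simp }
  have hinj : Function.Injective L := by
    intro T S h
    have : (T : H →ₗ[ℂ] H) = S := b.ext fun i => congrFun h i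
    exact ContinuousLinearMap.coe_injective this
  let e : (H →L[ℂ] H) ≃ₗ[ℂ] LinearMap.range L := LinearEquiv.ofInjective L hinj
  have hcomp : Continuous fun g : G => e (π.toFun g) := by
    have heq : (fun g : G => e (π.toFun g)) = fun g =>
        (⟨L (π.toFun g), LinearMap.mem_range_self L _⟩ : LinearMap.range L) :=
      funext fun g => Subtype.ext (LinearEquiv.ofInjective_apply L (π.toFun g))
    rw [heq]
    refine Continuous.subtype_mk ?_ _
    exact continuous_pi fun i => π.continuous'.comp (continuous_id.prodMk continuous_const)
  have hsymm : Continuous (e.symm : LinearMap.range L →ₗ[ℂ] (H →L[ℂ] H)) :=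
    LinearMap.continuous_of_finiteDimensional _
  have hco := hsymm.comp hcomp
  have hfin : (fun g : G => π.toFun g) = (e.symm : LinearMap.range L →ₗ[ℂ] (H →L[ℂ] H)) ∘ fun g => e (π.toFun g) := by
    funext g
    simp
  rw [hfin]
  exact hco

/-- The one-parameter group of operators attached to `γ`. -/
def u (π : UnitaryRep G H) (γ : OneParam G) (t : ℝ) : H →L[ℂ] H := π.toFun (γ.1 t)

lemma continuous_u (γ : OneParam G) : Continuous (u π γ) :=
  (continuous_rep π).comp γ.1.continuous

lemma oneParam_zero (γ : OneParam G) : γ.1 0 = 1 := by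
  have h := γ.2 0 0
  rw [add_zero] at h
  exact (left_eq_mul.mp h)

lemma u_zero (γ : OneParam G) : u π γ 0 = 1 := by
  rw [u, oneParam_zero, π.map_one']

lemma u_add (γ : OneParam G) (s t : ℝ) : u π γ (s + t) = u π γ s * u π γ t := by
  rw [u, u, u, γ.2, π.map_mul']; rfl

lemma u_mul_integral (γ : OneParam G) (t ε : ℝ) :
    u π γ t * (∫ s in (0:ℝ)..ε, u π γ s) = ∫ s in t..(t + ε), u π γ s := by
  have hint : IntervalIntegrable (u π γ) MeasureTheory.volume 0 ε :=
    (continuous_u π γ).intervalIntegrable _ _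
  have h1 := (ContinuousLinearMap.mul ℂ (H →L[ℂ] H)
    (u π γ t)).intervalIntegral_comp_comm hint
  rw [show (ContinuousLinearMap.mul ℂ (H →L[ℂ] H) (u π γ t))
      (∫ s in (0:ℝ)..ε, u π γ s) = u π γ t * ∫ s in (0:ℝ)..ε, u π γ s from rfl] at h1
  rw [← h1]
  have h2 : (∫ s in (0:ℝ)..ε, ContinuousLinearMap.mul ℂ (H →L[ℂ] H) (u π γ t) (u π γ s))
      = ∫ s in (0:ℝ)..ε, u π γ (t + s) := by
    congr 1
    funext s
    exact (u_add π γ t s).symm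
  rw [h2, intervalIntegral.integral_comp_add_left (u π γ) t, add_zero]

lemma hasDerivAt_u_of_isUnit (γ : OneParam G) {ε : ℝ}
    (hB : IsUnit (∫ s in (0:ℝ)..ε, u π γ s)) (t : ℝ) :
    HasDerivAt (u π γ)
      (u π γ t * ((u π γ ε - 1) * Ring.inverse (∫ s in (0:ℝ)..ε, u π γ s))) t := by
  set B := ∫ s in (0:ℝ)..ε, u π γ s with hBdef
  have hcont := continuous_u π γ
  have hint : ∀ a b : ℝ, IntervalIntegrable (u π γ) MeasureTheory.volume a b :=
    fun a b => hcont.intervalIntegrable a b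
  have hF : ∀ t : ℝ, u π γ t * B
      = (∫ s in (0:ℝ)..(t + ε), u π γ s) - ∫ s in (0:ℝ)..t, u π γ s := by
    intro t
    rw [hBdef, u_mul_integral,
      ← intervalIntegral.integral_add_adjacent_intervals (hint 0 t) (hint t (t + ε))]
    abel
  have hd1 : HasDerivAt (fun t : ℝ => ∫ s in (0:ℝ)..t, u π γ s) (u π γ t) t :=
    intervalIntegral.integral_hasDerivAt_right (hint 0 t)
      (hcont.stronglyMeasurableAtFilter _ _) hcont.continuousAt
  have hd2 : HasDerivAt (fun t : ℝ => ∫ s in (0:ℝ)..(t + ε), u π γ s) (u π γ (t + ε)) t := by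
    have h := intervalIntegral.integral_hasDerivAt_right (hint 0 (t + ε))
      (hcont.stronglyMeasurableAtFilter _ _) hcont.continuousAt
    have hh : HasDerivAt (fun t : ℝ => t + ε) 1 t := (hasDerivAt_id t).add_const ε
    have := h.scomp t hh
    simp at this
    exact this
  have hdF : HasDerivAt (fun t => u π γ t * B) (u π γ (t + ε) - u π γ t) t := by
    rw [show (fun t => u π γ t * B) = fun t =>
      (∫ s in (0:ℝ)..(t + ε), u π γ s) - ∫ s in (0:ℝ)..t, u π γ s from funext hF]
    exact hd2.sub hd1
  have hdu : HasDerivAt (u π γ) ((u π γ (t + ε) - u π γ t) * Ring.inverse B) t := by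
    have h3 := hdF.mul_const (Ring.inverse B)
    have h4 : (fun t => u π γ t * B * Ring.inverse B) = u π γ := by
      funext s
      rw [mul_assoc, Ring.mul_inverse_cancel B hB, mul_one]
    rwa [h4] at h3
  convert hdu using 1
  rw [u_add π γ t ε, ← mul_assoc, mul_sub, mul_one]

lemma isUnit_integral (γ : OneParam G) {ε : ℝ} (hε : 0 < ε)
    (hsmall : ∀ s ∈ Set.uIoc (0:ℝ) ε, ‖u π γ s - 1‖ ≤ 1/2) :
    IsUnit (∫ s in (0:ℝ)..ε, u π γ s) := by
  set B := ∫ s in (0:ℝ)..ε, u π γ s with hBdef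
  have hint := (continuous_u π γ).intervalIntegrable (μ := MeasureTheory.volume) 0 ε
  have h1 : ∫ s in (0:ℝ)..ε, (u π γ s - 1) = B - ε • 1 := by
    rw [intervalIntegral.integral_sub hint intervalIntegrable_const,
      intervalIntegral.integral_const, hBdef, sub_zero]
  have h2 : ‖B - ε • (1 : H →L[ℂ] H)‖ ≤ 1/2 * |ε - 0| := by
    rw [← h1]
    exact intervalIntegral.norm_integral_le_of_norm_le_const hsmall
  have h2' : ‖B - ε • (1 : H →L[ℂ] H)‖ ≤ ε / 2 := by
    rw [sub_zero, abs_of_pos hε] at h2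
    linarith
  have hx : ‖(1 : H →L[ℂ] H) - ε⁻¹ • B‖ < 1 := by
    have hrw : (1 : H →L[ℂ] H) - ε⁻¹ • B = -(ε⁻¹ • (B - ε • 1)) := by
      rw [smul_sub, smul_smul, inv_mul_cancel₀ hε.ne', one_smul, neg_sub]
    rw [hrw, norm_neg, norm_smul ε⁻¹ (B - ε • (1 : H →L[ℂ] H)), Real.norm_eq_abs,
      abs_of_pos (inv_pos.mpr hε)]
    calc ε⁻¹ * ‖B - ε • (1 : H →L[ℂ] H)‖ ≤ ε⁻¹ * (ε / 2) :=
          mul_le_mul_of_nonneg_left h2' (inv_pos.mpr hε).le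
      _ = 1/2 := by field_simp
      _ < 1 := by norm_num
  have hunit : IsUnit (ε⁻¹ • B) := by
    have h := (Units.oneSub ((1 : H →L[ℂ] H) - ε⁻¹ • B) hx).isUnit
    rw [Units.val_oneSub, sub_sub_cancel] at h
    exact h
  obtain ⟨v, hv⟩ := hunit
  have hB' : B = ε • (v : H →L[ℂ] H) := by
    rw [hv, smul_smul, mul_inv_cancel₀ hε.ne', one_smul]
  refine ⟨⟨B, ε⁻¹ • (↑v⁻¹ : H →L[ℂ] H), ?_, ?_⟩, rfl⟩
  · show B * (ε⁻¹ • (↑v⁻¹ : H →L[ℂ] H)) = 1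
    rw [mul_smul_comm, hB', smul_mul_assoc, Units.mul_inv, smul_smul,
      inv_mul_cancel₀ hε.ne', one_smul]
  · show (ε⁻¹ • (↑v⁻¹ : H →L[ℂ] H)) * B = 1
    rw [smul_mul_assoc, hB', mul_smul_comm, Units.inv_mul, smul_smul,
      inv_mul_cancel₀ hε.ne', one_smul]

lemma exists_eps (γ : OneParam G) :
    ∃ ε : ℝ, 0 < ε ∧ IsUnit (∫ s in (0:ℝ)..ε, u π γ s) := by
  have hc : ContinuousAt (u π γ) 0 := (continuous_u π γ).continuousAt
  rw [Metric.continuousAt_iff] at hc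
  obtain ⟨δ, hδ, hball⟩ := hc (1/2) (by norm_num)
  refine ⟨δ/2, by positivity, isUnit_integral π γ (by positivity) ?_⟩
  intro s hs
  rw [Set.uIoc_of_le (by positivity)] at hs
  have hdist : dist s 0 < δ := by
    rw [Real.dist_eq, sub_zero, abs_of_pos hs.1]
    linarith [hs.2]
  have h := hball hdist
  rw [u_zero π γ] at h
  rw [dist_eq_norm] at h
  exact h.le

/-- The infinitesimal generator of `γ` in the representation. -/
def Cop (π : UnitaryRep G H) (γ : OneParam G) : H →L[ℂ] H := deriv (u π γ) 0

lemma hasDerivAt_u (γ : OneParam G) (t : ℝ) :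
    HasDerivAt (u π γ) (u π γ t * Cop π γ) t := by
  obtain ⟨ε, hε, hB⟩ := exists_eps π γ
  have h0 := hasDerivAt_u_of_isUnit π γ hB 0
  rw [u_zero π γ, one_mul] at h0
  have hC : Cop π γ = (u π γ ε - 1) * Ring.inverse (∫ s in (0:ℝ)..ε, u π γ s) := h0.deriv
  rw [hC]
  exact hasDerivAt_u_of_isUnit π γ hB t

lemma continuous_Cop : Continuous (Cop π) := by
  rw [continuous_iff_continuousAt]
  intro γ₀
  obtain ⟨ε, hε, hB₀⟩ := exists_eps π γ₀
  have hBcont : Continuous fun γ : OneParam G => ∫ s in (0:ℝ)..ε, u π γ s := by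
    have h1 : Continuous fun γ : OneParam G =>
        (⟨fun g => π.toFun g, continuous_rep π⟩ : C(G, H →L[ℂ] H)).comp γ.1 :=
      (ContinuousMap.continuous_postcomp _).comp continuous_subtype_val
    exact (continuous_integralCM 0 ε).comp h1
  have hSopen : IsOpen {γ : OneParam G | IsUnit (∫ s in (0:ℝ)..ε, u π γ s)} :=
    Units.isOpen.preimage hBcont
  have hmem : {γ : OneParam G | IsUnit (∫ s in (0:ℝ)..ε, u π γ s)} ∈ 𝓝 γ₀ :=
    hSopen.mem_nhds hB₀
  have heq : ∀ γ ∈ {γ : OneParam G | IsUnit (∫ s in (0:ℝ)..ε, u π γ s)},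
      Cop π γ = (u π γ ε - 1) * Ring.inverse (∫ s in (0:ℝ)..ε, u π γ s) := by
    intro γ hγ
    have h0 := hasDerivAt_u_of_isUnit π γ hγ 0
    rw [u_zero π γ, one_mul] at h0
    exact h0.deriv
  have hcont2 : ContinuousAt (fun γ : OneParam G =>
      (u π γ ε - 1) * Ring.inverse (∫ s in (0:ℝ)..ε, u π γ s)) γ₀ := by
    apply ContinuousAt.mul
    · refine ContinuousAt.sub ?_ continuousAt_const
      exact ((continuous_rep π).comp
        ((continuous_eval_const ε).comp continuous_subtype_val)).continuousAt
    · have h := NormedRing.inverse_continuousAt hB₀.unit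
      rw [hB₀.unit_spec] at h
      exact ContinuousAt.comp (x := γ₀) h hBcont.continuousAt
  exact hcont2.congr (Filter.eventuallyEq_of_mem hmem heq).symm

lemma hasDirDerivAt_rep (γ : OneParam G) (v : H) (g : G) :
    HasDirDerivAt (fun g : G => π.toFun g v) γ g (π.toFun g (Cop π γ v)) := by
  have h0 := hasDerivAt_u π γ 0
  rw [u_zero π γ, one_mul] at h0
  have hs : Tendsto (fun t : ℝ => t⁻¹ • (u π γ t - 1)) (𝓝[≠] (0:ℝ)) (𝓝 (Cop π γ)) := by
    have h := hasDerivAt_iff_tendsto_slope.mp h0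
    have heq : slope (u π γ) 0 = fun t : ℝ => t⁻¹ • (u π γ t - 1) := by
      funext t
      rw [slope_def_module, sub_zero, u_zero π γ]
    rwa [heq] at h
  have hev : Continuous fun T : H →L[ℂ] H => π.toFun g (T v) :=
    (π.toFun g).continuous.comp (ContinuousLinearMap.apply ℂ H v).continuous
  have hten := hev.continuousAt.tendsto.comp hs
  have hfun : (fun t : ℝ => t⁻¹ • (π.toFun (g * γ.1 t) v - π.toFun g v))
      = fun t : ℝ => π.toFun g ((t⁻¹ • (u π γ t - 1)) v) := by
    funext t
    rw [π.map_mul']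
    simp only [ContinuousLinearMap.smul_apply, ContinuousLinearMap.sub_apply,
      ContinuousLinearMap.one_apply, ContinuousLinearMap.coe_comp', Function.comp_apply,
      map_sub, ContinuousLinearMap.map_smul_of_tower]
    rfl
  show Tendsto (fun t : ℝ => t⁻¹ • (π.toFun (g * γ.1 t) v - π.toFun g v)) (𝓝[≠] (0:ℝ))
    (𝓝 (π.toFun g (Cop π γ v)))
  rw [hfun]
  exact hten

lemma dirDeriv_eq {φ : G → H} {γ : OneParam G} {g : G} {w : H}
    (h : HasDirDerivAt φ γ g w) : dirDeriv φ γ g = w := by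
  haveI : Nonempty H := ⟨0⟩
  exact h.limUnder_eq

/-- The iterated generators applied to `v`. -/
def W (π : UnitaryRep G H) (v : H) : (k : ℕ) → (Fin k → OneParam G) → H
  | 0, _ => v
  | (k+1), γ => Cop π (γ (Fin.last k)) (W π v k fun i => γ i.castSucc)

lemma iteratedD_rep (v : H) : ∀ (k : ℕ) (γ : Fin k → OneParam G),
    iteratedD (fun g : G => π.toFun g v) k γ = fun g => π.toFun g (W π v k γ)
  | 0, _ => rfl
  | (k+1), γ => by
    show dirDeriv (iteratedD (fun g : G => π.toFun g v) k fun i => γ i.castSucc)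
        (γ (Fin.last k)) = _
    rw [iteratedD_rep v k]
    funext g
    exact dirDeriv_eq
      (hasDirDerivAt_rep π (γ (Fin.last k)) (W π v k fun i => γ i.castSucc) g)

lemma continuous_W (v : H) : ∀ k : ℕ, Continuous fun γ : Fin k → OneParam G => W π v k γ
  | 0 => continuous_const
  | (k+1) => by
    have h1 : Continuous fun γ : Fin (k+1) → OneParam G => Cop π (γ (Fin.last k)) :=
      (continuous_Cop π).comp (continuous_apply (Fin.last k))
    have h2 : Continuous fun γ : Fin (k+1) → OneParam G => W π v k (fun i => γ i.castSucc) :=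
      (continuous_W v k).comp (continuous_pi fun i => continuous_apply i.castSucc)
    exact isBoundedBilinearMap_apply.continuous.comp (h1.prodMk h2)

end SmoothVecAux

end SmoothVecAux
/-- For a continuous unitary representation of a topological group on a finite-dimensional
complex Hilbert space, every vector is a smooth vector. -/
theorem smoothVec_eq_univ_of_finiteDimensional
    (G : Type*) [TopologicalSpace G] [Group G]
    (H : Type*) [NormedAddCommGroup H] [InnerProductSpace ℂ H] [FiniteDimensional ℂ H]
    (π : UnitaryRep G H) :
    π.smoothVec = Set.univ := by
  ext v
  simp only [Set.mem_univ, iff_true]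
  show IsCSmooth fun g : G => π.toFun g v
  refine ⟨π.continuous'.comp (continuous_id.prodMk continuous_const), fun k => ⟨?_, ?_⟩⟩
  · intro γ g
    have h1 := SmoothVecAux.iteratedD_rep π v k (fun i => γ i.castSucc)
    have h2 := SmoothVecAux.iteratedD_rep π v (k+1) γ
    rw [h1, h2]
    exact SmoothVecAux.hasDirDerivAt_rep π (γ (Fin.last k))
      (SmoothVecAux.W π v k fun i => γ i.castSucc) g
  · have h2 : (fun p : (Fin (k+1) → OneParam G) × G =>
        iteratedD (fun g : G => π.toFun g v) (k+1) p.1 p.2)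
        = fun p => π.toFun p.2 (SmoothVecAux.W π v (k+1) p.1) := by
      funext p
      rw [SmoothVecAux.iteratedD_rep π v (k+1) p.1]
    rw [h2]
    exact π.continuous'.comp (continuous_snd.prodMk
      ((SmoothVecAux.continuous_W π v (k+1)).comp continuous_fst))
end

section
/- Let G be a topological group and π : G → U(H) a continuous unitary representation. Then the moment map Ψ_π : H_∞ \ {0} → ℝ^{𝔏(G)} is continuous, where H_∞ \ {0} carries the topology of the space of smooth vectors H_∞ and ℝ^{𝔏(G)} carries the topology of pointwise convergence. -/
open Filter Topology MeasureTheory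
open scoped Topology

/-- The moment map `Ψ_π : H_∞ \ {0} → ℝ^{𝔏(G)}` of a continuous unitary representation
is continuous, `H_∞` carrying the topology of the space of smooth vectors and `ℝ^{𝔏(G)}`
the topology of pointwise convergence. -/
theorem momentMap_continuousOn
    (G : Type*) [TopologicalSpace G] [Group G]
    (H : Type*) [NormedAddCommGroup H] [InnerProductSpace ℂ H]
    (π : UnitaryRep G H) :
    ContinuousOn (fun v : π.SmoothVecs => π.momentMap v.1)
      {v : π.SmoothVecs | v.1 ≠ 0} := by
  -- Auxiliary continuity facts
  have hembed : ∀ k : ℕ, Continuous (fun v : π.SmoothVecs =>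
      (π.smoothVecEmbed v).iteratedDCM k) := by
    intro k
    have h1 : Continuous (fun f : SmoothFns G H => f.iteratedDCM k) :=
      continuous_iInf_dom
        (t₁ := fun k => TopologicalSpace.induced
          (fun f : SmoothFns G H => f.iteratedDCM k) inferInstance)
        (i := k) continuous_induced_dom
    exact h1.comp continuous_induced_dom
  have hval : Continuous (fun v : π.SmoothVecs => v.1) := by
    have h := (continuous_eval_const
        ((Fin.elim0, 1) : (Fin 0 → OneParam G) × G)).comp (hembed 0)
    convert h using 1
    funext v
    show v.1 = iteratedD (fun g : G => π.toFun g v.1) 0 Fin.elim0 1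
    simp [iteratedD, π.map_one']
  have hdpi : ∀ γ : OneParam G, Continuous (fun v : π.SmoothVecs => π.dpi γ v.1) := by
    intro γ
    have h := (continuous_eval_const
        (((fun _ => γ), 1) : (Fin 1 → OneParam G) × G)).comp (hembed 1)
    convert h using 1
    funext v
    rfl
  have hinner : ∀ γ : OneParam G,
      Continuous (fun v : π.SmoothVecs => (inner ℂ v.1 (π.dpi γ v.1) : ℂ)) := by
    intro γ
    exact hval.inner (hdpi γ)
  have hself : Continuous (fun v : π.SmoothVecs => (inner ℂ v.1 v.1 : ℂ)) :=
    hval.inner hval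
  apply continuousOn_pi.2
  intro γ
  apply Complex.continuous_re.comp_continuousOn
  apply ContinuousOn.div_const
  apply ContinuousOn.div ((hinner γ).continuousOn) (hself.continuousOn)
  intro v hv
  simpa [inner_self_eq_zero] using hv
end

section
/- Let G be a topological group and π : G → U(H) a continuous unitary representation. Then for every integer k ≥ 1, every compact set K ⊆ 𝔏(G)^k, and every smooth vector v ∈ H_∞, one has lim_{x→1} sup_{γ∈K} ‖dπ(γ)v − dπ(Ad_G(x)γ)v‖ = 0, where Ad_G(x)(γ₁,…,γ_k) := (xγ₁(·)x⁻¹, …, xγ_k(·)x⁻¹) and dπ(γ₁,…,γ_k) := dπ(γ₁)⋯dπ(γ_k). -/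
open Filter Topology MeasureTheory
open scoped Topology

noncomputable section

/-- The adjoint action of `G` on `𝔏(G)`: `Ad_G(x)γ = xγ(·)x⁻¹`. -/
def OneParam.conj {G : Type*} [TopologicalSpace G] [Group G] [IsTopologicalGroup G]
    (x : G) (γ : OneParam G) : OneParam G :=
  ⟨⟨fun t : ℝ => x * γ.1 t * x⁻¹,
      (continuous_const.mul (map_continuous γ.1)).mul continuous_const⟩,
    fun t s => by
      simp only [ContinuousMap.coe_mk, γ.2 t s]
      group⟩

/-- Iterated operators `dπ(γ₁)⋯dπ(γ_k)` on smooth vectors. -/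
def UnitaryRep.dpiIter {G : Type*} [TopologicalSpace G] [Group G]
    {H : Type*} [NormedAddCommGroup H] [InnerProductSpace ℂ H]
    (π : UnitaryRep G H) : (k : ℕ) → (Fin k → OneParam G) → H → H
  | 0, _, v => v
  | (k + 1), γ, v => π.dpi (γ 0) (π.dpiIter k (fun i => γ i.succ) v)

section AuxLemmas

variable {G : Type*} [TopologicalSpace G] [Group G]
variable {H : Type*} [NormedAddCommGroup H] [InnerProductSpace ℂ H]

/-- Equivariance: the iterated directional derivatives of the orbit map of a smooth
vector satisfy `F(g·h) = π(g)(F(h))`. -/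
lemma UnitaryRep.iteratedD_mul (π : UnitaryRep G H) {v : H} (hv : v ∈ π.smoothVec) :
    ∀ (k : ℕ) (δ : Fin k → OneParam G) (g h : G),
      iteratedD (fun g => π.toFun g v) k δ (g * h)
        = π.toFun g (iteratedD (fun g => π.toFun g v) k δ h) := by
  intro k
  induction k with
  | zero =>
    intro δ g h
    simp [iteratedD, π.map_mul']
  | succ k ih =>
    intro δ g h
    have hdd := (hv.2 k).1 δ h
    have hT : Tendsto
        (fun t : ℝ => t⁻¹ • (iteratedD (fun g => π.toFun g v) k (fun i => δ i.castSucc)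
            ((g * h) * (δ (Fin.last k)).1 t)
          - iteratedD (fun g => π.toFun g v) k (fun i => δ i.castSucc) (g * h)))
        (𝓝[≠] (0:ℝ))
        (𝓝 (π.toFun g (iteratedD (fun g => π.toFun g v) (k+1) δ h))) := by
      have h2 := ((π.toFun g).continuous.tendsto _).comp hdd
      refine h2.congr fun t => ?_
      simp only [Function.comp_apply]
      rw [ContinuousLinearMap.map_smul_of_tower, map_sub, mul_assoc, ih _ g, ih _ g]
    exact hT.limUnder_eq

/-- The iterated operators `dπ(γ₁)⋯dπ(γ_k)` on a smooth vector equal the iterated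
directional derivative of the orbit map at the identity (in reversed order). -/
lemma UnitaryRep.dpiIter_eq (π : UnitaryRep G H) {v : H} (hv : v ∈ π.smoothVec) :
    ∀ (k : ℕ) (γ : Fin k → OneParam G),
      π.dpiIter k γ v = iteratedD (fun g => π.toFun g v) k (fun i => γ i.rev) 1 := by
  intro k
  induction k with
  | zero =>
    intro γ
    simp [UnitaryRep.dpiIter, iteratedD, π.map_one']
  | succ k ih =>
    intro γ
    have hlast : (fun i : Fin (k + 1) => γ i.rev) (Fin.last k) = γ 0 := by
      simp [Fin.rev_last]
    have hcast : (fun i : Fin k => (fun j : Fin (k+1) => γ j.rev) i.castSucc)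
        = fun i : Fin k => γ i.rev.succ := by
      funext i
      simp [Fin.rev_castSucc]
    show π.dpi (γ 0) (π.dpiIter k (fun i => γ i.succ) v)
      = dirDeriv (iteratedD (fun g => π.toFun g v) k
          (fun i : Fin k => (fun j : Fin (k+1) => γ j.rev) i.castSucc))
        ((fun i : Fin (k+1) => γ i.rev) (Fin.last k)) 1
    rw [hlast, hcast, ih]
    show limUnder _ _ = limUnder _ _
    congr 1
    funext t
    have hmul := π.iteratedD_mul hv k (fun i => γ i.rev.succ) ((γ 0).1 t) 1
    rw [mul_one] at hmul
    simp [π.map_one', hmul]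

lemma OneParam.conj_one {G : Type*} [TopologicalSpace G] [Group G] [IsTopologicalGroup G]
    (γ : OneParam G) : OneParam.conj 1 γ = γ := by
  apply Subtype.ext
  apply ContinuousMap.ext
  intro t
  simp [OneParam.conj]

lemma OneParam.continuous_conj {G : Type*} [TopologicalSpace G] [Group G]
    [IsTopologicalGroup G] :
    Continuous fun p : G × OneParam G => OneParam.conj p.1 p.2 := by
  apply Continuous.subtype_mk
  apply ContinuousMap.continuous_of_continuous_uncurry
  have hev : Continuous fun q : (G × OneParam G) × ℝ => (q.1.2 : OneParam G).1 q.2 :=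
    ContinuousEval.continuous_eval.comp
      ((continuous_subtype_val.comp (continuous_snd.comp continuous_fst)).prodMk
        continuous_snd)
  exact ((continuous_fst.comp continuous_fst).mul hev).mul
    (continuous_fst.comp continuous_fst).inv

end AuxLemmas

/-- For every `k ≥ 1`, every compact `K ⊆ 𝔏(G)^k` and every smooth vector `v`, one has
`lim_{x→1} sup_{γ ∈ K} ‖dπ(γ)v − dπ(Ad_G(x)γ)v‖ = 0`, phrased as: for every `ε > 0`,
eventually as `x → 1` one has `‖dπ(γ)v − dπ(Ad_G(x)γ)v‖ < ε` for all `γ ∈ K`. -/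
theorem dpiIter_conj_tendsto_uniformly_on_compact
    (G : Type*) [TopologicalSpace G] [Group G] [IsTopologicalGroup G]
    (H : Type*) [NormedAddCommGroup H] [InnerProductSpace ℂ H]
    (π : UnitaryRep G H)
    (k : ℕ) (hk : 1 ≤ k)
    (K : Set (Fin k → OneParam G)) (hK : IsCompact K)
    (v : H) (hv : v ∈ π.smoothVec) :
    ∀ ε > (0 : ℝ), ∀ᶠ x in 𝓝 (1 : G), ∀ γ ∈ K,
      ‖π.dpiIter k γ v - π.dpiIter k (fun i => OneParam.conj x (γ i)) v‖ < ε := by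
  intro ε hε
  have hsm : IsCSmooth fun g : G => π.toFun g v := hv
  have hF := hsm.continuous_iteratedD k
  have hEq : ∀ (x : G) (γ : Fin k → OneParam G),
      π.dpiIter k γ v - π.dpiIter k (fun i => OneParam.conj x (γ i)) v
        = iteratedD (fun g => π.toFun g v) k (fun i => γ i.rev) 1
          - iteratedD (fun g => π.toFun g v) k (fun i => OneParam.conj x (γ i.rev)) 1 := by
    intro x γ
    rw [π.dpiIter_eq hv, π.dpiIter_eq hv]
  have hcont : Continuous fun p : G × (Fin k → OneParam G) =>
      ‖iteratedD (fun g => π.toFun g v) k (fun i => p.2 i.rev) 1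
        - iteratedD (fun g => π.toFun g v) k
            (fun i => OneParam.conj p.1 (p.2 i.rev)) 1‖ := by
    apply Continuous.norm
    apply Continuous.sub
    · exact hF.comp ((continuous_pi fun i =>
        (continuous_apply i.rev).comp continuous_snd).prodMk continuous_const)
    · exact hF.comp ((continuous_pi fun i =>
        OneParam.continuous_conj.comp (continuous_fst.prodMk
          ((continuous_apply i.rev).comp continuous_snd))).prodMk continuous_const)
  have key : ∀ᶠ x in 𝓝 (1 : G), ∀ γ ∈ K,
      ‖iteratedD (fun g => π.toFun g v) k (fun i => γ i.rev) 1
        - iteratedD (fun g => π.toFun g v) k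
            (fun i => OneParam.conj x (γ i.rev)) 1‖ < ε := by
    apply hK.eventually_forall_of_forall_eventually
    intro γ hγ
    have ht : Tendsto (fun p : G × (Fin k → OneParam G) =>
        ‖iteratedD (fun g => π.toFun g v) k (fun i => p.2 i.rev) 1
          - iteratedD (fun g => π.toFun g v) k
              (fun i => OneParam.conj p.1 (p.2 i.rev)) 1‖) (𝓝 ((1 : G), γ)) (𝓝 0) := by
      have := hcont.tendsto ((1 : G), γ)
      simpa [OneParam.conj_one] using this
    exact ht.eventually_lt_const hε
  filter_upwards [key] with x hx γ hγ
  rw [hEq]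
  exact hx γ hγ

end
end
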